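/- Let n ≥ 2, let (X,d) be a complete metric space with |X| ≥ n, and let T : X → X be a mapping contracting total pairwise distance on n points. Then there exists a point x ∈ X and an integer k with 1 ≤ k ≤ n−1 such that T^k(x) = x (i.e., T has a periodic point whose prime period is at most n−1). -/

import Mathlib

noncomputable def totalS {X : Type*} [MetricSpace X] {n : ℕ} (x : Fin n → X) : ℝ :=
  ∑ i : Fin n, ∑ j ∈ Finset.Ioi i, dist (x i) (x j)

lemma totalS_nonneg {X : Type*} [MetricSpace X] {n : ℕ} (x : Fin n → X) : 0 ≤ totalS x :=
  Finset.sum_nonneg fun _ _ => Finset.sum_nonneg fun _ _ => dist_nonneg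

lemma dist_le_totalS {X : Type*} [MetricSpace X] {n : ℕ} (x : Fin n → X) {i j : Fin n}
    (h : i < j) : dist (x i) (x j) ≤ totalS x := by
  have h1 : ∑ j' ∈ Finset.Ioi i, dist (x i) (x j') ≤ totalS x :=
    Finset.single_le_sum (f := fun k => ∑ j' ∈ Finset.Ioi k, dist (x k) (x j'))
      (fun k _ => Finset.sum_nonneg fun _ _ => dist_nonneg) (Finset.mem_univ i)
  have h2 : dist (x i) (x j) ≤ ∑ j' ∈ Finset.Ioi i, dist (x i) (x j') :=
    Finset.single_le_sum (fun _ _ => dist_nonneg) (Finset.mem_Ioi.mpr h)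
  linarith

lemma totalS_le {X : Type*} [MetricSpace X] {n : ℕ} (x : Fin n → X) (z : X) (δ : ℝ)
    (hδ0 : 0 ≤ δ) (hδ : ∀ i, dist (x i) z ≤ δ) : totalS x ≤ 2 * n ^ 2 * δ := by
  have step : totalS x ≤ ∑ _i : Fin n, ∑ _j ∈ Finset.Ioi _i, (2 * δ) := by
    apply Finset.sum_le_sum
    intro i _
    apply Finset.sum_le_sum
    intro j _
    calc dist (x i) (x j) ≤ dist (x i) z + dist (x j) z := dist_triangle_right _ _ _
      _ ≤ δ + δ := add_le_add (hδ i) (hδ j)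
      _ = 2 * δ := by ring
  have step2 : ∀ i : Fin n, ∑ _j ∈ Finset.Ioi i, (2 * δ) ≤ (n : ℝ) * (2 * δ) := by
    intro i
    rw [Finset.sum_const, nsmul_eq_mul]
    apply mul_le_mul_of_nonneg_right _ (by positivity)
    exact_mod_cast (Finset.card_le_univ _).trans_eq (by simp)
  calc totalS x ≤ ∑ _i : Fin n, ∑ _j ∈ Finset.Ioi _i, (2 * δ) := step
    _ ≤ ∑ _i : Fin n, (n : ℝ) * (2 * δ) := Finset.sum_le_sum fun i _ => step2 i
    _ = (n : ℝ) * ((n : ℝ) * (2 * δ)) := by rw [Finset.sum_const, nsmul_eq_mul]; simp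
    _ = 2 * n ^ 2 * δ := by ring

lemma totalS_pos {X : Type*} [MetricSpace X] {n : ℕ} (hn : 2 ≤ n) (x : Fin n → X)
    (hx : Function.Injective x) : 0 < totalS x := by
  have h01 : (⟨0, by omega⟩ : Fin n) < ⟨1, by omega⟩ := by simp [Fin.lt_def]
  have hne : x ⟨0, by omega⟩ ≠ x ⟨1, by omega⟩ := fun h => by
    have := hx h; simp [Fin.ext_iff] at this
  calc (0:ℝ) < dist (x ⟨0, by omega⟩) (x ⟨1, by omega⟩) := dist_pos.mpr hne
    _ ≤ totalS x := dist_le_totalS x h01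

lemma cycle_case {X : Type*} [MetricSpace X] {n : ℕ} (hn : 2 ≤ n) (T : X → X) (α : ℝ)
    (hα1 : α < 1)
    (hT : ∀ x : Fin n → X, Function.Injective x → totalS (T ∘ x) ≤ α * totalS x)
    (z : X) (p : ℕ) (hp : 1 ≤ p) (hz : T^[p] z = z) :
    ∃ (w : X) (k : ℕ), 1 ≤ k ∧ k ≤ n - 1 ∧ T^[k] w = w := by
  have hex : ∃ k, 1 ≤ k ∧ T^[k] z = z := ⟨p, hp, hz⟩
  classical
  set m := Nat.find hex with hm
  obtain ⟨hm1, hmz⟩ := Nat.find_spec hex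
  by_cases hcase : m ≤ n - 1
  · exact ⟨z, m, hm1, hcase, hmz⟩
  exfalso
  have hnm : n ≤ m := by omega
  haveI : NeZero m := ⟨by omega⟩
  set c : Fin m → X := fun a => T^[(a : ℕ)] z with hc
  have hcinj : Function.Injective c := by
    intro a b hab
    by_contra hne
    -- wlog a.val < b.val
    have key : ∀ a b : Fin m, (a:ℕ) < (b:ℕ) → c a ≠ c b := by
      intro a b hlt heq
      have h1 : T^[m - (b:ℕ) + (a:ℕ)] z = z := by
        rw [Function.iterate_add_apply]
        have heq' : T^[(a:ℕ)] z = T^[(b:ℕ)] z := heq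
        rw [heq', ← Function.iterate_add_apply,
          (by omega : m - (b:ℕ) + (b:ℕ) = m)]
        exact hmz
      have hb : (b:ℕ) < m := b.isLt
      have := Nat.find_min hex (m := m - (b:ℕ) + (a:ℕ)) (by omega)
      exact this ⟨by omega, h1⟩
    rcases lt_or_gt_of_ne (fun h : a = b => hne h) with h | h
    · exact key a b (by exact_mod_cast h) hab
    · exact key b a (by exact_mod_cast h) hab.symm
  have hshift : ∀ a : Fin m, T (c a) = c (a + 1) := by
    intro a
    have h1 : T (c a) = T^[(a:ℕ) + 1] z := (Function.iterate_succ_apply' T _ z).symm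
    have hval : ((a + 1 : Fin m) : ℕ) = ((a:ℕ) + 1) % m := by
      simp [Fin.add_def]
    rw [h1, hc]
    simp only [hval]
    rcases lt_or_eq_of_le (Nat.succ_le_of_lt a.isLt) with h | h
    · rw [Nat.mod_eq_of_lt h]
    · have h' : (a:ℕ) + 1 = m := by omega
      rw [h', Nat.mod_self, Function.iterate_zero_apply]
      exact hmz
  -- minimize totalS over injective tuples into the cycle
  have hne2 : Nonempty {g : Fin n → Fin m // Function.Injective g} :=
    ⟨⟨Fin.castLE hnm, Fin.castLE_injective hnm⟩⟩
  obtain ⟨g, hg⟩ := Finite.exists_min (fun g : {g : Fin n → Fin m // Function.Injective g} =>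
    totalS (fun i => c (g.1 i)))
  set x : Fin n → X := fun i => c (g.1 i) with hx
  have hxinj : Function.Injective x := hcinj.comp g.2
  have hTx : T ∘ x = fun i => c (g.1 i + 1) := by
    funext i; exact hshift (g.1 i)
  have hg' : Function.Injective (fun i => g.1 i + 1) := by
    intro i j hij
    exact g.2 (by simpa using add_left_injective (1 : Fin m) hij)
  have hmin := hg ⟨fun i => g.1 i + 1, hg'⟩
  have hcontr := hT x hxinj
  rw [hTx] at hcontr
  have hpos : 0 < totalS x := totalS_pos hn x hxinj
  simp only at hmin
  nlinarith [hmin, hcontr, hpos, hα1]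

lemma inj_case {X : Type*} [MetricSpace X] [CompleteSpace X] {n : ℕ} (hn : 2 ≤ n)
    (T : X → X) (α : ℝ) (hα0 : 0 ≤ α) (hα1 : α < 1)
    (hT : ∀ x : Fin n → X, Function.Injective x → totalS (T ∘ x) ≤ α * totalS x)
    (x0 : X) (ho : Function.Injective (fun k : ℕ => T^[k] x0)) :
    ∃ z : X, T z = z := by
  set o : ℕ → X := fun k => T^[k] x0 with hodef
  have hoT : ∀ k, T (o k) = o (k + 1) := fun k =>
    (Function.iterate_succ_apply' T k x0).symm
  set u : ℕ → Fin n → X := fun k i => o (k + (i : ℕ)) with hu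
  have huinj : ∀ k, Function.Injective (u k) := by
    intro k i j hij
    have := ho hij
    have : k + (i:ℕ) = k + (j:ℕ) := this
    exact Fin.ext (by omega)
  have hTu : ∀ k, T ∘ u k = u (k + 1) := by
    intro k; funext i
    show T (o (k + (i:ℕ))) = o (k + 1 + (i:ℕ))
    rw [hoT]; exact congrArg o (by omega)
  set f : ℕ → ℝ := fun k => totalS (u k) with hf
  have hstep : ∀ k, f (k + 1) ≤ α * f k := by
    intro k
    have := hT (u k) (huinj k)
    rwa [hTu k] at this
  have hgeo : ∀ k, f k ≤ α ^ k * f 0 := by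
    intro k
    induction k with
    | zero => simp
    | succ k ih =>
      calc f (k + 1) ≤ α * f k := hstep k
        _ ≤ α * (α ^ k * f 0) := mul_le_mul_of_nonneg_left ih hα0
        _ = α ^ (k + 1) * f 0 := by ring
  have i0 : Fin n := ⟨0, by omega⟩
  have hd : ∀ k, dist (o k) (o (k + 1)) ≤ f 0 * α ^ k := by
    intro k
    have h01 : (⟨0, by omega⟩ : Fin n) < ⟨1, by omega⟩ := by simp [Fin.lt_def]
    have := dist_le_totalS (u k) h01
    have e0 : u k ⟨0, by omega⟩ = o k := rfl
    have e1 : u k ⟨1, by omega⟩ = o (k + 1) := rfl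
    rw [e0, e1] at this
    calc dist (o k) (o (k + 1)) ≤ f k := this
      _ ≤ α ^ k * f 0 := hgeo k
      _ = f 0 * α ^ k := by ring
  have hcauchy : CauchySeq o := cauchySeq_of_le_geometric α (f 0) hα1 hd
  obtain ⟨z, hz⟩ := cauchySeq_tendsto_of_complete hcauchy
  -- z is hit at most once by the orbit
  have hM : ∃ M : ℕ, ∀ j, M ≤ j → o j ≠ z := by
    by_cases h : ∃ m, o m = z
    · obtain ⟨m, hm⟩ := h
      refine ⟨m + 1, fun j hj hjz => ?_⟩
      have : j = m := ho (hjz.trans hm.symm)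
      omega
    · exact ⟨0, fun j _ hj => h ⟨j, hj⟩⟩
  obtain ⟨M, hM⟩ := hM
  refine ⟨z, ?_⟩
  have key : ∀ ε : ℝ, 0 < ε → dist (T z) z ≤ (2 * n ^ 2 + 1) * ε := by
    intro ε hε
    obtain ⟨N, hN⟩ := (Metric.tendsto_atTop.mp hz) ε hε
    set K := max M N with hK
    set v : Fin n → X := fun i => if (i : ℕ) = 0 then z else o (K + (i : ℕ)) with hv
    have hvinj : Function.Injective v := by
      intro i j hij
      simp only [hv] at hij
      by_cases hi : (i:ℕ) = 0 <;> by_cases hj : (j:ℕ) = 0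
      · exact Fin.ext (by omega)
      · rw [if_pos hi, if_neg hj] at hij
        exact absurd hij.symm (hM _ (by omega))
      · rw [if_neg hi, if_pos hj] at hij
        exact absurd hij (hM _ (by omega))
      · rw [if_neg hi, if_neg hj] at hij
        have := ho hij
        have : K + (i:ℕ) = K + (j:ℕ) := this
        exact Fin.ext (by omega)
    have hvd : ∀ i, dist (v i) z ≤ ε := by
      intro i
      simp only [hv]
      by_cases hi : (i:ℕ) = 0
      · rw [if_pos hi]; simp [le_of_lt hε]
      · rw [if_neg hi]
        exact le_of_lt (hN _ (by omega))
    have hcontr := hT v hvinj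
    have h01 : (⟨0, by omega⟩ : Fin n) < ⟨1, by omega⟩ := by simp [Fin.lt_def]
    have hterm := dist_le_totalS (T ∘ v) h01
    have e0 : (T ∘ v) ⟨0, by omega⟩ = T z := by simp [hv]
    have e1 : (T ∘ v) ⟨1, by omega⟩ = o (K + 2) := by
      show T (v ⟨1, by omega⟩) = o (K + 2)
      rw [hv]
      simp only [if_neg (by norm_num : ¬(((⟨1, by omega⟩ : Fin n) : ℕ) = 0))]
      rw [hoT]
    rw [e0, e1] at hterm
    have hSv : totalS v ≤ 2 * n ^ 2 * ε := totalS_le v z ε (le_of_lt hε) hvd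
    have hdist2 : dist (o (K + 2)) z ≤ ε := le_of_lt (hN _ (by omega))
    have h1 : dist (T z) (o (K + 2)) ≤ α * totalS v := le_trans hterm hcontr
    have hSv0 : 0 ≤ totalS v := totalS_nonneg v
    calc dist (T z) z ≤ dist (T z) (o (K + 2)) + dist (o (K + 2)) z := dist_triangle _ _ _
      _ ≤ α * totalS v + ε := add_le_add h1 hdist2
      _ ≤ 1 * (2 * n ^ 2 * ε) + ε := by
          apply add_le_add_left
          apply mul_le_mul (le_of_lt hα1) hSv hSv0 zero_le_one
      _ = (2 * n ^ 2 + 1) * ε := by ring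
  have hC : (0:ℝ) < 2 * n ^ 2 + 1 := by positivity
  have : dist (T z) z ≤ 0 := by
    refine le_of_forall_pos_le_add fun ε hε => ?_
    have := key (ε / (2 * n ^ 2 + 1)) (by positivity)
    rw [mul_div_cancel₀ _ (ne_of_gt hC)] at this
    linarith
  have := le_antisymm this dist_nonneg
  exact dist_eq_zero.mp this


theorem stmt_3 {X : Type*} [MetricSpace X] [CompleteSpace X] (n : ℕ) (hn : 2 ≤ n)
    (hcard : ∃ f : Fin n → X, Function.Injective f)
    (T : X → X)
    (hT : ∃ α : ℝ, 0 ≤ α ∧ α < 1 ∧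
      ∀ x : Fin n → X, Function.Injective x → totalS (T ∘ x) ≤ α * totalS x) :
    ∃ (x : X) (k : ℕ), 1 ≤ k ∧ k ≤ n - 1 ∧ T^[k] x = x := by
  obtain ⟨α, hα0, hα1, hT⟩ := hT
  obtain ⟨f, hf⟩ := hcard
  set x0 : X := f ⟨0, by omega⟩ with hx0
  by_cases ho : Function.Injective (fun k : ℕ => T^[k] x0)
  · obtain ⟨z, hz⟩ := inj_case hn T α hα0 hα1 hT x0 ho
    exact ⟨z, 1, le_refl 1, by omega, by simpa using hz⟩
  · rw [Function.not_injective_iff] at ho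
    obtain ⟨a, b, hab, hne⟩ := ho
    have key : ∀ a b : ℕ, a < b → T^[a] x0 = T^[b] x0 →
        ∃ (w : X) (k : ℕ), 1 ≤ k ∧ k ≤ n - 1 ∧ T^[k] w = w := by
      intro a b hlt heq
      apply cycle_case hn T α hα1 hT (T^[a] x0) (b - a) (by omega)
      rw [← Function.iterate_add_apply, (by omega : b - a + a = b)]
      exact heq.symm
    rcases lt_or_gt_of_ne hne with h | h
    · exact key a b h hab
    · exact key b a h hab.symm
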